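/- Let d ≥ 1, let φ : ℝ^d → ℝ be nonnegative with φ ∈ L²(ℝ^d), let α : ℝ^d → ℝ be measurable, and let a ∈ ℝ^d. Then for every θ ∈ ℝ, ‖φ(·−a) e^{iα(·)} − e^{iθ} φ‖²_{L²(ℝ^d)} ≥ ‖φ(·−a) − φ‖²_{L²(ℝ^d)}. Consequently inf_{θ∈ℝ} ‖φ(·−a)e^{iα(·)} − e^{iθ}φ‖_{L²} ≥ ‖φ(·−a) − φ‖_{L²}. -/

import Mathlib

open MeasureTheory

lemma key_pt (A B s t : ℝ) (hA : 0 ≤ A) (hB : 0 ≤ B) :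
    (A - B) ^ 2 ≤ ‖(A : ℂ) * Complex.exp (Complex.I * s)
      - Complex.exp (Complex.I * t) * B‖ ^ 2 := by
  have h1 : ‖(A : ℂ) * Complex.exp (Complex.I * s)‖ = A := by
    simp [map_mul, Complex.norm_exp, abs_of_nonneg hA]
  have h2 : ‖Complex.exp (Complex.I * t) * B‖ = B := by
    simp [map_mul, Complex.norm_exp, abs_of_nonneg hB]
  have h3 := abs_norm_sub_norm_le ((A : ℂ) * Complex.exp (Complex.I * s))
      (Complex.exp (Complex.I * t) * B)
  rw [h1, h2] at h3
  calc (A - B) ^ 2 = |A - B| ^ 2 := (sq_abs _).symm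
    _ ≤ _ := pow_le_pow_left₀ (abs_nonneg _) h3 2

/-- Key instability estimate: for a nonnegative `L²` profile `φ` on `ℝ^d`, a measurable
phase `α` and a translation `a`, the modulated translate `φ(·−a)e^{iα(·)}` is at least as
far in `L²` from every point `e^{iθ}φ` of the phase orbit of `φ` as the unmodulated
translate `φ(·−a)` is from `φ`; consequently the same holds for the infimum over `θ`. -/
theorem modulated_translate_L2_lower_bound
    (d : ℕ) (hd : 1 ≤ d) (φ : EuclideanSpace ℝ (Fin d) → ℝ)
    (hnn : ∀ x, 0 ≤ φ x) (hL2 : MemLp φ 2 volume)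
    (α : EuclideanSpace ℝ (Fin d) → ℝ) (hα : Measurable α)
    (a : EuclideanSpace ℝ (Fin d)) :
    (∀ θ : ℝ,
      (∫ x, ‖((φ (x - a) : ℝ) : ℂ) * Complex.exp (Complex.I * (α x : ℂ))
          - Complex.exp (Complex.I * (θ : ℂ)) * ((φ x : ℝ) : ℂ)‖ ^ 2)
        ≥ ∫ x, (φ (x - a) - φ x) ^ 2)
    ∧ (⨅ θ : ℝ, Real.sqrt
        (∫ x, ‖((φ (x - a) : ℝ) : ℂ) * Complex.exp (Complex.I * (α x : ℂ))
          - Complex.exp (Complex.I * (θ : ℂ)) * ((φ x : ℝ) : ℂ)‖ ^ 2))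
        ≥ Real.sqrt (∫ x, (φ (x - a) - φ x) ^ 2) := by
  have hA2 : MemLp (fun x => φ (x - a)) 2 (volume : Measure (EuclideanSpace ℝ (Fin d))) :=
    hL2.comp_measurePreserving (measurePreserving_sub_right volume a)
  have hg : Integrable (fun x => (φ (x - a) - φ x) ^ 2)
      (volume : Measure (EuclideanSpace ℝ (Fin d))) := (hA2.sub hL2).integrable_sq
  have main : ∀ θ : ℝ,
      (∫ x, ‖((φ (x - a) : ℝ) : ℂ) * Complex.exp (Complex.I * (α x : ℂ))
          - Complex.exp (Complex.I * (θ : ℂ)) * ((φ x : ℝ) : ℂ)‖ ^ 2)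
        ≥ ∫ x, (φ (x - a) - φ x) ^ 2 := by
    intro θ
    set F : EuclideanSpace ℝ (Fin d) → ℂ := fun x =>
      ((φ (x - a) : ℝ) : ℂ) * Complex.exp (Complex.I * (α x : ℂ))
        - Complex.exp (Complex.I * (θ : ℂ)) * ((φ x : ℝ) : ℂ) with hF
    have hFm : AEStronglyMeasurable F volume := by
      apply AEStronglyMeasurable.sub
      · exact (Complex.continuous_ofReal.comp_aestronglyMeasurable hA2.1).mul
          ((Complex.measurable_exp.comp
            ((measurable_const.mul (Complex.measurable_ofReal.comp hα)))).aestronglyMeasurable)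
      · exact (Complex.continuous_ofReal.comp_aestronglyMeasurable hL2.1).const_mul _
    have hFL2 : MemLp (fun x => ‖F x‖) 2 volume := by
      have hsum : MemLp (fun x => φ (x - a) + φ x) 2
          (volume : Measure (EuclideanSpace ℝ (Fin d))) := hA2.add hL2
      apply hsum.of_le (continuous_norm.comp_aestronglyMeasurable hFm)
      filter_upwards with x
      have hb : ‖F x‖ ≤ φ (x - a) + φ x := by
        refine le_trans (norm_sub_le _ _) ?_
        simp [map_mul, Complex.norm_exp, abs_of_nonneg (hnn _)]
      rw [Real.norm_eq_abs, Real.norm_eq_abs, abs_of_nonneg (norm_nonneg _)]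
      exact hb.trans (le_abs_self _)
    have hf : Integrable (fun x => ‖F x‖ ^ 2) volume := hFL2.integrable_sq
    refine integral_mono hg hf ?_
    intro x
    exact key_pt _ _ _ _ (hnn _) (hnn _)
  refine ⟨main, ?_⟩
  refine le_ciInf fun θ => Real.sqrt_le_sqrt (main θ)
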